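/- Every finite simple graph G has an ec-partition; in particular the edge coalition number EC(G) is well defined (there exists at least one partition of the edge set of G into parts each of which either is a singleton edge dominating set or is not an edge dominating set but forms an edge coalition with another part). -/

import Mathlib

open SimpleGraph

/-- Two edges (as unordered pairs of vertices) share an endpoint. -/
def SharesEndpoint {V : Type*} (e f : Sym2 V) : Prop := ∃ v, v ∈ e ∧ v ∈ f

/-- `D` is an edge dominating set of `G`: `D` consists of edges of `G` and every
edge of `G` outside `D` shares an endpoint with some edge of `D`. -/
def IsEdgeDominating {V : Type*} (G : SimpleGraph V) (D : Set (Sym2 V)) : Prop :=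
  D ⊆ G.edgeSet ∧ ∀ e ∈ G.edgeSet \ D, ∃ f ∈ D, SharesEndpoint e f

/-- Two disjoint edge sets form an edge coalition: neither is an edge dominating
set but their union is. -/
def IsEdgeCoalition {V : Type*} (G : SimpleGraph V) (E₁ E₂ : Set (Sym2 V)) : Prop :=
  Disjoint E₁ E₂ ∧ ¬ IsEdgeDominating G E₁ ∧ ¬ IsEdgeDominating G E₂ ∧
    IsEdgeDominating G (E₁ ∪ E₂)

/-- An ec-partition of `G`: a partition of the edge set of `G` (into nonempty,
pairwise disjoint parts) such that every part either is a singleton edge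
dominating set, or is not an edge dominating set but forms an edge coalition
with another part. -/
def IsECPartition {V : Type*} (G : SimpleGraph V) (P : Set (Set (Sym2 V))) : Prop :=
  (∀ A ∈ P, A.Nonempty) ∧
  P.Pairwise Disjoint ∧
  ⋃₀ P = G.edgeSet ∧
  ∀ A ∈ P, ((∃ e, A = {e}) ∧ IsEdgeDominating G A) ∨
    (¬ IsEdgeDominating G A ∧ ∃ B ∈ P, B ≠ A ∧ IsEdgeCoalition G A B)

/-- The edge coalition number `EC(G)`: the maximum number of parts over all
ec-partitions of `G`. -/
noncomputable def edgeCoalitionNumber {V : Type*} (G : SimpleGraph V) : ℕ :=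
  sSup {k | ∃ P, IsECPartition G P ∧ P.ncard = k}

/-- Every finite simple graph has an ec-partition, so the edge coalition number
is well defined. -/
theorem exists_ec_partition {V : Type*} [Fintype V] (G : SimpleGraph V) :
    ∃ P : Set (Set (Sym2 V)), IsECPartition G P := by
  classical
  by_cases hall : ∀ e ∈ G.edgeSet, IsEdgeDominating G {e}
  · -- every edge alone dominates: partition into singletons
    refine ⟨(fun e => ({e} : Set (Sym2 V))) '' G.edgeSet, ?_, ?_, ?_, ?_⟩
    · rintro A ⟨e, _, rfl⟩; exact ⟨e, rfl⟩
    · rintro A ⟨e, _, rfl⟩ B ⟨f, _, rfl⟩ hne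
      refine Set.disjoint_singleton_left.2 ?_
      intro h
      exact hne (by rw [Set.mem_singleton_iff] at h; rw [h])
    · ext e
      simp only [Set.sUnion_image, Set.mem_iUnion, Set.mem_singleton_iff]
      constructor
      · rintro ⟨f, hf, rfl⟩; exact hf
      · intro he; exact ⟨e, he, rfl⟩
    · rintro A ⟨e, he, rfl⟩
      exact Or.inl ⟨⟨e, rfl⟩, hall e he⟩
  · push_neg at hall
    obtain ⟨e₀, he₀, hnd₀⟩ := hall
    -- take a maximal non-dominating set A containing e₀
    have hS : ({A : Set (Sym2 V) | e₀ ∈ A ∧ A ⊆ G.edgeSet ∧ ¬ IsEdgeDominating G A}).Finite :=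
      Set.toFinite _
    have hSne : ({A : Set (Sym2 V) | e₀ ∈ A ∧ A ⊆ G.edgeSet ∧ ¬ IsEdgeDominating G A}).Nonempty :=
      ⟨{e₀}, rfl, by simpa using he₀, hnd₀⟩
    obtain ⟨A, hAS, hmax⟩ : ∃ A ∈ {A : Set (Sym2 V) | e₀ ∈ A ∧ A ⊆ G.edgeSet ∧ ¬ IsEdgeDominating G A},
        ∀ a' ∈ {A : Set (Sym2 V) | e₀ ∈ A ∧ A ⊆ G.edgeSet ∧ ¬ IsEdgeDominating G A},
          id A ≤ id a' → id A = id a' := by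
      obtain ⟨A, hAS, hmax⟩ := Set.Finite.exists_maximalFor id _ hS hSne
      exact ⟨A, hAS, fun a' ha' h => le_antisymm h (hmax ha' h)⟩
    obtain ⟨he₀A, hAsub, hAnd⟩ := hAS
    -- every strict extension of A by an edge dominates
    have hext : ∀ g ∈ G.edgeSet, g ∉ A → IsEdgeDominating G (A ∪ {g}) := by
      intro g hg hgA
      by_contra hnd
      have h1 : (A ∪ {g}) ∈ {A : Set (Sym2 V) | e₀ ∈ A ∧ A ⊆ G.edgeSet ∧ ¬ IsEdgeDominating G A} :=
        ⟨Or.inl he₀A, Set.union_subset hAsub (by simpa using hg), hnd⟩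
      have h2 := hmax _ h1 Set.subset_union_left
      simp only [id] at h2
      exact hgA (by rw [h2]; exact Or.inr rfl)
    -- from non-domination of A get an undominated edge h₀ outside A
    have hAnd' := hAnd
    rw [IsEdgeDominating] at hAnd'
    push_neg at hAnd'
    obtain ⟨h₀, hh₀mem, hh₀⟩ := hAnd' hAsub
    have hh₀E : h₀ ∈ G.edgeSet := hh₀mem.1
    have hh₀A : h₀ ∉ A := hh₀mem.2
    -- the singleton {h₀} is not dominating
    have hh₀nd : ¬ IsEdgeDominating G {h₀} := by
      intro hd
      have hne : e₀ ≠ h₀ := fun h => hh₀A (h ▸ he₀A)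
      obtain ⟨f, hf, v, hv1, hv2⟩ := hd.2 e₀ ⟨he₀, by simpa using hne⟩
      rw [Set.mem_singleton_iff] at hf
      subst hf
      exact hh₀ e₀ he₀A ⟨v, hv2, hv1⟩
    -- the partition: A together with singletons of the complement
    refine ⟨insert A ((fun g => ({g} : Set (Sym2 V))) '' (G.edgeSet \ A)), ?_, ?_, ?_, ?_⟩
    · rintro B (rfl | ⟨g, _, rfl⟩)
      exacts [⟨e₀, he₀A⟩, ⟨g, rfl⟩]
    · rintro B (rfl | ⟨g, hg, rfl⟩) C (rfl | ⟨f, hf, rfl⟩) hne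
      · exact absurd rfl hne
      · exact Set.disjoint_singleton_right.2 hf.2
      · exact Set.disjoint_singleton_left.2 hg.2
      · refine Set.disjoint_singleton_left.2 ?_
        intro h
        exact hne (by rw [Set.mem_singleton_iff] at h; rw [h])
    · ext e
      simp only [Set.sUnion_insert, Set.sUnion_image, Set.mem_union, Set.mem_iUnion,
        Set.mem_singleton_iff, Set.mem_diff]
      constructor
      · rintro (h | ⟨f, hf, rfl⟩)
        exacts [hAsub h, hf.1]
      · intro he
        by_cases heA : e ∈ A
        · exact Or.inl heA
        · exact Or.inr ⟨e, ⟨he, heA⟩, rfl⟩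
    · rintro B (rfl | ⟨g, hg, rfl⟩)
      · -- part A: coalition with {h₀}
        refine Or.inr ⟨hAnd, {h₀}, Or.inr ⟨h₀, ⟨hh₀E, hh₀A⟩, rfl⟩, ?_, ?_⟩
        · intro h
          exact hh₀A (h ▸ rfl)
        · exact ⟨Set.disjoint_singleton_right.2 hh₀A, hAnd, hh₀nd,
            by simpa using hext h₀ hh₀E hh₀A⟩
      · by_cases hgd : IsEdgeDominating G {g}
        · exact Or.inl ⟨⟨g, rfl⟩, hgd⟩
        · refine Or.inr ⟨hgd, A, Or.inl rfl, ?_, ?_⟩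
          · intro h
            have h3 : A = ({g} : Set (Sym2 V)) := h
            have h2 : e₀ ∈ ({g} : Set (Sym2 V)) := h3 ▸ he₀A
            simp only [Set.mem_singleton_iff] at h2
            exact hg.2 (h2 ▸ he₀A)
          · exact ⟨Set.disjoint_singleton_left.2 hg.2, hgd, hAnd,
              by rw [Set.union_comm]; exact hext g hg.1 hg.2⟩
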